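/- Let B be the ball algebra on the closed unit ball of ℂ^d and let J ⊆ B be a closed homogeneous ideal. Let K = {p ∈ ℂ[z₁,…,z_d] : ι(p) ∈ J}, where ι(p) is the restriction of p to the closed ball. Then K is a homogeneous ideal of ℂ[z₁,…,z_d], the restrictions ι(K) are contained in J, J is contained in (hence equal to) the closure of ι(K) in B, and K is the unique homogeneous ideal of ℂ[z₁,…,z_d] with ι(K) ⊆ J ⊆ closure(ι(K)). -/

import Mathlib

open MvPolynomial Metric

noncomputable section

abbrev Cd (d : ℕ) := EuclideanSpace ℂ (Fin d)

abbrev CBall (d : ℕ) : Set (Cd d) := Metric.closedBall (0 : Cd d) 1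

instance (d : ℕ) : CompactSpace (CBall d) :=
  isCompact_iff_compactSpace.mp (isCompact_closedBall _ _)

/-- The `i`-th coordinate function on the closed unit ball. -/
def coordFn (d : ℕ) (i : Fin d) : C(CBall d, ℂ) :=
  ⟨fun z => (z : Cd d) i, by first
    | exact (continuous_apply i).comp ((PiLp.continuous_ofLp _ _).comp continuous_subtype_val)
    | fun_prop
    | continuity⟩

/-- Restriction of a polynomial to the closed unit ball, as an element of
`C(closedBall, ℂ)`. -/
def polyMap (d : ℕ) : MvPolynomial (Fin d) ℂ →ₐ[ℂ] C(CBall d, ℂ) :=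
  aeval (coordFn d)

/-- The ball algebra: the closure, in the Banach algebra of continuous functions on
the closed unit ball of ℂ^d with the supremum norm, of the restrictions of
polynomials. -/
def ballAlg (d : ℕ) : Set C(CBall d, ℂ) := closure (Set.range (polyMap d))

/-- `J` is an ideal of the ball algebra `B`. -/
def IsIdealOfBallAlg (d : ℕ) (J : Set C(CBall d, ℂ)) : Prop :=
  J ⊆ ballAlg d ∧ (0 : C(CBall d, ℂ)) ∈ J ∧
    (∀ f ∈ J, ∀ g ∈ J, f + g ∈ J) ∧ (∀ f ∈ J, ∀ g ∈ ballAlg d, g * f ∈ J)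

/-- The self-map of the closed ball given by `z ↦ t z` for `‖t‖ ≤ 1`. -/
def dilatePt (d : ℕ) (t : ℂ) (ht : ‖t‖ ≤ 1) : C(CBall d, CBall d) :=
  ⟨fun z => ⟨t • (z : Cd d), by
      have hz : ‖(z : Cd d)‖ ≤ 1 := mem_closedBall_zero_iff.mp z.2
      show t • (z : Cd d) ∈ Metric.closedBall 0 1
      rw [mem_closedBall_zero_iff, norm_smul]
      exact mul_le_one₀ ht (norm_nonneg _) hz⟩,
    by exact Continuous.subtype_mk (continuous_subtype_val.const_smul t) _⟩

/-- The dilation `f ↦ (z ↦ f (t z))` on continuous functions on the closed ball. -/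
def dilateFn (d : ℕ) (t : ℂ) (ht : ‖t‖ ≤ 1) (f : C(CBall d, ℂ)) : C(CBall d, ℂ) :=
  f.comp (dilatePt d t ht)

/-- A closed ideal of the ball algebra is homogeneous if it is invariant under all
dilations `z ↦ t z`, `|t| < 1`. -/
def IsHomogBallIdeal (d : ℕ) (J : Set C(CBall d, ℂ)) : Prop :=
  ∀ f ∈ J, ∀ t : ℂ, ∀ ht : ‖t‖ < 1, dilateFn d t ht.le f ∈ J

/-- An ideal of polynomials is homogeneous if it contains the homogeneous
components of each of its elements. -/
def IsHomogeneousIdeal {d : ℕ} (I : Ideal (MvPolynomial (Fin d) ℂ)) : Prop :=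
  ∀ p ∈ I, ∀ n : ℕ, homogeneousComponent n p ∈ I


namespace Stmt15Aux
lemma polyMap_apply (d : ℕ) (p : MvPolynomial (Fin d) ℂ) (z : CBall d) :
    polyMap d p z = eval (fun i => (z : Cd d) i) p := by
  induction p using MvPolynomial.induction_on with
  | C a =>
    show (aeval (coordFn d)) (C a) z = _
    rw [aeval_C, eval_C]
    rfl
  | add p q hp hq => simp [map_add, hp, hq]
  | mul_X p i hp =>
    show (aeval (coordFn d)) (p * X i) z = _
    rw [map_mul, aeval_X, eval_mul, eval_X]
    simp only [ContinuousMap.mul_apply]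
    rw [show (aeval (coordFn d)) p z = _ from hp]
    rfl

lemma eval_mul_of_isHomogeneous {d : ℕ} {φ : MvPolynomial (Fin d) ℂ} {n : ℕ}
    (hφ : φ.IsHomogeneous n) (t : ℂ) (x : Fin d → ℂ) :
    eval (fun i => t * x i) φ = t ^ n * eval x φ := by
  rw [eval_eq, eval_eq, Finset.mul_sum]
  apply Finset.sum_congr rfl
  intro dd hdd
  have hdeg : dd.degree = n := by
    have := hφ (mem_support_iff.mp hdd)
    rw [Finsupp.degree_eq_weight_one]; exact this
  have hprod : ∏ i ∈ dd.support, (t * x i) ^ dd i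
      = (∏ i ∈ dd.support, t ^ dd i) * ∏ i ∈ dd.support, x i ^ dd i := by
    rw [← Finset.prod_mul_distrib]
    exact Finset.prod_congr rfl fun i _ => mul_pow _ _ _
  rw [hprod, Finset.prod_pow_eq_pow_sum]
  have : ∑ i ∈ dd.support, dd i = n := by rw [← hdeg]; rfl
  rw [this]; ring

section Inj
open Polynomial in
lemma eval_aeval_line {d : ℕ} (w : Fin d → ℂ) (P : MvPolynomial (Fin d) ℂ) (t : ℂ) :
    Polynomial.eval t (MvPolynomial.aeval (fun i => Polynomial.C (w i) * Polynomial.X) P)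
      = MvPolynomial.eval (fun i => w i * t) P := by
  induction P using MvPolynomial.induction_on with
  | C a => simp
  | add p q hp hq => simp [hp, hq]
  | mul_X p i hp => simp [hp]

lemma polyMap_injective (d : ℕ) : Function.Injective (polyMap d) := by
  intro p q h
  apply MvPolynomial.funext
  intro w
  set W : Cd d := (WithLp.equiv 2 (Fin d → ℂ)).symm w with hW
  set r : ℝ := (1 + ‖W‖)⁻¹ with hr
  have hrpos : 0 < r := by positivity
  have key : ∀ t : ℂ, ‖t‖ ≤ r →
      MvPolynomial.eval (fun i => w i * t) p = MvPolynomial.eval (fun i => w i * t) q := by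
    intro t ht
    have hz : t • W ∈ CBall d := by
      rw [Metric.mem_closedBall, dist_zero_right, norm_smul]
      calc ‖t‖ * ‖W‖ ≤ r * ‖W‖ := by gcongr
        _ ≤ 1 := by
          rw [hr, inv_mul_le_iff₀ (by positivity)]
          linarith [norm_nonneg W]
    have hcoord : (fun i => ((⟨t • W, hz⟩ : CBall d) : Cd d) i) = fun i => w i * t := by
      funext i
      show (t • W) i = w i * t
      rw [PiLp.smul_apply, smul_eq_mul]
      show t * w i = w i * t
      ring
    have h2 := congrArg (fun f : C(CBall d, ℂ) => f ⟨t • W, hz⟩) h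
    simp only [polyMap_apply] at h2
    rwa [hcoord] at h2
  have hFG : (MvPolynomial.aeval (fun i => Polynomial.C (w i) * Polynomial.X) p :
      Polynomial ℂ) = MvPolynomial.aeval (fun i => Polynomial.C (w i) * Polynomial.X) q := by
    have hsub : Complex.ofReal '' Set.Icc 0 r ⊆
        {t : ℂ | Polynomial.IsRoot (MvPolynomial.aeval
          (fun i => Polynomial.C (w i) * Polynomial.X) p -
          MvPolynomial.aeval (fun i => Polynomial.C (w i) * Polynomial.X) q) t} := by
      rintro _ ⟨x, hx, rfl⟩
      have hnorm : ‖(x : ℂ)‖ ≤ r := by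
        rw [Complex.norm_real, Real.norm_eq_abs, abs_of_nonneg hx.1]; exact hx.2
      simp only [Set.mem_setOf_eq, Polynomial.IsRoot, Polynomial.eval_sub,
        eval_aeval_line, key _ hnorm, sub_self]
    have hinf : (Set.Icc (0:ℝ) r).Infinite := Set.Icc_infinite hrpos
    have := Polynomial.eq_zero_of_infinite_isRoot _
      ((hinf.image (Complex.ofReal_injective.injOn)).mono hsub)
    exact sub_eq_zero.mp this
  have := congrArg (Polynomial.eval 1) hFG
  rw [eval_aeval_line, eval_aeval_line] at this
  simpa using this
end Inj
def root (N : ℕ) : ℂ := Complex.exp (2 * Real.pi * Complex.I / ((N+1 : ℕ) : ℂ))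

lemma isPrimitiveRoot_root (N : ℕ) : IsPrimitiveRoot (root N) (N+1) :=
  Complex.isPrimitiveRoot_exp (N+1) (Nat.succ_ne_zero N)

lemma root_ne_zero (N : ℕ) : root N ≠ 0 :=
  (isPrimitiveRoot_root N).ne_zero (Nat.succ_ne_zero N)

lemma norm_root (N : ℕ) : ‖root N‖ = 1 := by
  have h1 : ‖root N‖ ^ (N+1) = 1 := by
    rw [← norm_pow, (isPrimitiveRoot_root N).pow_eq_one, norm_one]
  rcases lt_trichotomy ‖root N‖ 1 with h | h | h
  · have h2 : ‖root N‖ ^ (N+1) < 1 := by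
      first
      | exact pow_lt_one₀ (norm_nonneg _) h (Nat.succ_ne_zero N)
      | exact pow_lt_one (norm_nonneg _) h (Nat.succ_ne_zero N)
    rw [h1] at h2; exact absurd h2 (lt_irrefl 1)
  · exact h
  · have h2 : 1 < ‖root N‖ ^ (N+1) := by
      first
      | exact one_lt_pow₀ h (Nat.succ_ne_zero N)
      | exact one_lt_pow h (Nat.succ_ne_zero N)
    rw [h1] at h2; exact absurd h2 (lt_irrefl 1)

lemma sum_root (N n m : ℕ) (hn : n ≤ N) (hm : m ≤ N) :
    ∑ j ∈ Finset.range (N+1), root N ^ (j*m) * (root N ^ (j*n))⁻¹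
      = if m = n then ((N : ℂ)+1) else 0 := by
  have hprim := isPrimitiveRoot_root N
  have hne := root_ne_zero N
  have hr1 : root N ^ (N+1) = 1 := hprim.pow_eq_one
  by_cases hmn : m = n
  · subst hmn
    simp only [if_pos rfl]
    have : ∀ j ∈ Finset.range (N+1), root N ^ (j*m) * (root N ^ (j*m))⁻¹ = 1 := by
      intro j _; exact mul_inv_cancel₀ (pow_ne_zero _ hne)
    rw [Finset.sum_congr rfl this, Finset.sum_const, Finset.card_range]
    push_cast; ring
  · set ζ : ℂ := root N ^ m * (root N ^ n)⁻¹ with hζ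
    have hterm : ∀ j, root N ^ (j*m) * (root N ^ (j*n))⁻¹ = ζ ^ j := by
      intro j
      rw [hζ, mul_pow, inv_pow, ← pow_mul, ← pow_mul, mul_comm m j, mul_comm n j]
    have e1 : (root N ^ m) ^ (N+1) = 1 := by
      rw [← pow_mul, mul_comm, pow_mul, hr1, one_pow]
    have e2 : (root N ^ n) ^ (N+1) = 1 := by
      rw [← pow_mul, mul_comm, pow_mul, hr1, one_pow]
    have hζ1 : ζ ^ (N+1) = 1 := by
      rw [hζ, mul_pow, inv_pow, e1, e2, inv_one, mul_one]
    have hζne : ζ ≠ 1 := by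
      intro hcon
      apply hmn
      refine hprim.pow_inj (Nat.lt_succ_of_le hm) (Nat.lt_succ_of_le hn) ?_
      exact (mul_inv_eq_one₀ (pow_ne_zero _ hne)).mp hcon
    rw [Finset.sum_congr rfl (fun j _ => hterm j), geom_sum_eq hζne, hζ1]
    simp [hmn]

lemma eval_mul_expand {d : ℕ} (N : ℕ) (p : MvPolynomial (Fin d) ℂ) (hp : p.totalDegree ≤ N)
    (t : ℂ) (x : Fin d → ℂ) :
    eval (fun i => t * x i) p
      = ∑ m ∈ Finset.range (N+1), t ^ m * eval x (homogeneousComponent m p) := by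
  have hsum : ∑ m ∈ Finset.range (N+1), homogeneousComponent m p = p := by
    have h2 := Finset.sum_subset (f := fun m => homogeneousComponent m p)
      (Finset.range_subset_range.mpr (Nat.succ_le_succ hp))
      (fun m _ hm => homogeneousComponent_eq_zero m p (by
        simp only [Finset.mem_range, not_lt] at hm; exact hm))
    rw [← h2, sum_homogeneousComponent]
  conv_lhs => rw [← hsum]
  rw [map_sum]
  exact Finset.sum_congr rfl fun m _ =>
    eval_mul_of_isHomogeneous (homogeneousComponent_isHomogeneous m p) t x
lemma norm_mul_root_pow (N j : ℕ) (s : ℂ) : ‖s * root N ^ j‖ = ‖s‖ := by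
  rw [norm_mul, norm_pow, norm_root, one_pow, mul_one]

lemma extraction (d N n : ℕ) (hn : n ≤ N) (p : MvPolynomial (Fin d) ℂ)
    (hp : p.totalDegree ≤ N) (s : ℂ) (hs : ‖s‖ ≤ 1) :
    ∑ j ∈ Finset.range (N+1),
      ((((N:ℂ)+1)⁻¹ * (root N ^ (j*n))⁻¹) •
        dilateFn d (s * root N ^ j) (by rw [norm_mul_root_pow]; exact hs) (polyMap d p))
      = s ^ n • polyMap d (homogeneousComponent n p) := by
  have hN1 : ((N:ℂ)+1) ≠ 0 := Nat.cast_add_one_ne_zero N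
  ext z
  have hcoord : ∀ (t : ℂ) (ht : ‖t‖ ≤ 1),
      dilateFn d t ht (polyMap d p) z = eval (fun i => t * (z : Cd d) i) p := by
    intro t ht
    show polyMap d p (dilatePt d t ht z) = _
    rw [polyMap_apply]
    congr 1
  simp only [ContinuousMap.coe_sum, Finset.sum_apply, ContinuousMap.smul_apply, smul_eq_mul]
  rw [polyMap_apply]
  calc ∑ j ∈ Finset.range (N+1), (((N:ℂ)+1)⁻¹ * (root N ^ (j*n))⁻¹) *
        (dilateFn d (s * root N ^ j) (by rw [norm_mul_root_pow]; exact hs) (polyMap d p) z)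
      = ∑ j ∈ Finset.range (N+1), ∑ m ∈ Finset.range (N+1),
          (((N:ℂ)+1)⁻¹ * (root N ^ (j*n))⁻¹) *
            ((s * root N ^ j) ^ m * eval (fun i => (z:Cd d) i) (homogeneousComponent m p)) := by
        refine Finset.sum_congr rfl fun j _ => ?_
        rw [hcoord, eval_mul_expand N p hp, Finset.mul_sum]
    _ = ∑ m ∈ Finset.range (N+1), ∑ j ∈ Finset.range (N+1),
          (((N:ℂ)+1)⁻¹ * (root N ^ (j*n))⁻¹) *
            ((s * root N ^ j) ^ m * eval (fun i => (z:Cd d) i) (homogeneousComponent m p)) :=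
        Finset.sum_comm
    _ = ∑ m ∈ Finset.range (N+1),
          (if m = n then s ^ m * eval (fun i => (z:Cd d) i) (homogeneousComponent m p) else 0) := by
        refine Finset.sum_congr rfl fun m hm => ?_
        have hmN : m ≤ N := Nat.lt_succ_iff.mp (Finset.mem_range.mp hm)
        have hterm : ∀ j ∈ Finset.range (N+1),
            (((N:ℂ)+1)⁻¹ * (root N ^ (j*n))⁻¹) *
              ((s * root N ^ j) ^ m * eval (fun i => (z:Cd d) i) (homogeneousComponent m p))
            = (((N:ℂ)+1)⁻¹ * (s ^ m * eval (fun i => (z:Cd d) i) (homogeneousComponent m p))) *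
                (root N ^ (j*m) * (root N ^ (j*n))⁻¹) := by
          intro j _
          rw [mul_pow, ← pow_mul, mul_comm j m, pow_mul, ← pow_mul, mul_comm m j]
          ring
        rw [Finset.sum_congr rfl hterm, ← Finset.mul_sum, sum_root N n m hn hmN]
        by_cases hmn : m = n
        · rw [if_pos hmn, if_pos hmn]
          field_simp
        · rw [if_neg hmn, if_neg hmn, mul_zero]
    _ = s ^ n * eval (fun i => (z:Cd d) i) (homogeneousComponent n p) := by
        rw [Finset.sum_ite_eq' (Finset.range (N+1)) n]
        simp [Nat.lt_succ_of_le hn]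
lemma polyMap_mem_ballAlg (d : ℕ) (p : MvPolynomial (Fin d) ℂ) : polyMap d p ∈ ballAlg d :=
  subset_closure ⟨p, rfl⟩

lemma smul_mem_J {d : ℕ} {J : Set C(CBall d, ℂ)} (hJ : IsIdealOfBallAlg d J)
    {f : C(CBall d, ℂ)} (hf : f ∈ J) (c : ℂ) : c • f ∈ J := by
  rw [Algebra.smul_def]
  refine hJ.2.2.2 f hf _ ?_
  have : algebraMap ℂ C(CBall d, ℂ) c = polyMap d (C c) := by
    rw [← MvPolynomial.algebraMap_eq, AlgHom.commutes]
  rw [this]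
  exact polyMap_mem_ballAlg d _

lemma sum_mem_J {d : ℕ} {J : Set C(CBall d, ℂ)} (hJ : IsIdealOfBallAlg d J)
    {ι' : Type*} (s : Finset ι') (g : ι' → C(CBall d, ℂ)) (hg : ∀ i ∈ s, g i ∈ J) :
    ∑ i ∈ s, g i ∈ J :=
  Finset.sum_induction g (· ∈ J) (fun a b ha hb => hJ.2.2.1 a ha b hb) hJ.2.1 hg

lemma norm_dilateFn_le {d : ℕ} (t : ℂ) (ht : ‖t‖ ≤ 1) (f : C(CBall d, ℂ)) :
    ‖dilateFn d t ht f‖ ≤ ‖f‖ := by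
  refine (ContinuousMap.norm_le _ (norm_nonneg f)).mpr fun z => ?_
  exact f.norm_coe_le_norm _

lemma dilateFn_sub {d : ℕ} (t : ℂ) (ht : ‖t‖ ≤ 1) (f g : C(CBall d, ℂ)) :
    dilateFn d t ht (f - g) = dilateFn d t ht f - dilateFn d t ht g := by
  ext z; simp [dilateFn]

/-- The averaging (Cesàro-type extraction) operator. -/
def Tmap (d N n : ℕ) (s : ℂ) (hs : ‖s‖ ≤ 1) (f : C(CBall d, ℂ)) : C(CBall d, ℂ) :=
  ∑ j ∈ Finset.range (N+1),
    ((((N:ℂ)+1)⁻¹ * (root N ^ (j*n))⁻¹) •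
      dilateFn d (s * root N ^ j) (by rw [norm_mul_root_pow]; exact hs) f)

lemma Tmap_poly (d N n : ℕ) (hn : n ≤ N) (p : MvPolynomial (Fin d) ℂ)
    (hp : p.totalDegree ≤ N) (s : ℂ) (hs : ‖s‖ ≤ 1) :
    Tmap d N n s hs (polyMap d p) = s ^ n • polyMap d (homogeneousComponent n p) :=
  extraction d N n hn p hp s hs

lemma Tmap_sub (d N n : ℕ) (s : ℂ) (hs : ‖s‖ ≤ 1) (f g : C(CBall d, ℂ)) :
    Tmap d N n s hs f - Tmap d N n s hs g = Tmap d N n s hs (f - g) := by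
  unfold Tmap
  rw [← Finset.sum_sub_distrib]
  exact Finset.sum_congr rfl fun j _ => by rw [dilateFn_sub, smul_sub]

lemma norm_coeff (N n j : ℕ) : ‖(((N:ℂ)+1)⁻¹ * (root N ^ (j*n))⁻¹)‖ = ((N:ℝ)+1)⁻¹ := by
  rw [norm_mul, norm_inv, norm_inv, norm_pow, norm_root, one_pow, inv_one, mul_one]
  congr 1
  have : ((N:ℂ)+1) = ((N+1 : ℕ) : ℂ) := by push_cast; ring
  rw [this, Complex.norm_natCast]
  push_cast; ring

lemma norm_Tmap_le (d N n : ℕ) (s : ℂ) (hs : ‖s‖ ≤ 1) (f : C(CBall d, ℂ)) :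
    ‖Tmap d N n s hs f‖ ≤ ‖f‖ := by
  have hNpos : (0:ℝ) < (N:ℝ)+1 := by positivity
  calc ‖Tmap d N n s hs f‖
      ≤ ∑ j ∈ Finset.range (N+1), ‖(((N:ℂ)+1)⁻¹ * (root N ^ (j*n))⁻¹) •
          dilateFn d (s * root N ^ j) (by rw [norm_mul_root_pow]; exact hs) f‖ :=
        norm_sum_le _ _
    _ ≤ ∑ j ∈ Finset.range (N+1), ((N:ℝ)+1)⁻¹ * ‖f‖ := by
        refine Finset.sum_le_sum fun j _ => ?_
        rw [norm_smul, norm_coeff]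
        exact mul_le_mul_of_nonneg_left (norm_dilateFn_le _ _ f) (by positivity)
    _ = ‖f‖ := by
        rw [Finset.sum_const, Finset.card_range, nsmul_eq_mul]
        push_cast
        field_simp

lemma Tmap_mem_J {d : ℕ} {J : Set C(CBall d, ℂ)} (hJ : IsIdealOfBallAlg d J)
    (hJhom : IsHomogBallIdeal d J) (N n : ℕ) (s : ℂ) (hs : ‖s‖ ≤ 1) (hs' : ‖s‖ < 1)
    {f : C(CBall d, ℂ)} (hf : f ∈ J) : Tmap d N n s hs f ∈ J := by
  refine sum_mem_J hJ _ _ fun j _ => ?_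
  refine smul_mem_J hJ ?_ _
  exact hJhom f hf _ (by rw [norm_mul_root_pow]; exact hs')

lemma norm_polyMap_homComp_le (d n : ℕ) (p : MvPolynomial (Fin d) ℂ) :
    ‖polyMap d (homogeneousComponent n p)‖ ≤ ‖polyMap d p‖ := by
  have h := Tmap_poly d (max p.totalDegree n) n (le_max_right _ _) p (le_max_left _ _) 1
    (by rw [norm_one])
  rw [one_pow, one_smul] at h
  rw [← h]
  exact norm_Tmap_le _ _ _ _ _ _

/-- Dilation of a polynomial function expands into homogeneous components. -/
lemma dilate_polyMap_expand {d : ℕ} (N : ℕ) (p : MvPolynomial (Fin d) ℂ)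
    (hp : p.totalDegree ≤ N) (t : ℂ) (ht : ‖t‖ ≤ 1) :
    dilateFn d t ht (polyMap d p)
      = ∑ m ∈ Finset.range (N+1), t ^ m • polyMap d (homogeneousComponent m p) := by
  ext z
  have hcoord : dilateFn d t ht (polyMap d p) z = eval (fun i => t * (z : Cd d) i) p := by
    show polyMap d p (dilatePt d t ht z) = _
    rw [polyMap_apply]
    congr 1
  simp only [ContinuousMap.coe_sum, Finset.sum_apply, ContinuousMap.smul_apply, smul_eq_mul]
  rw [hcoord, eval_mul_expand N p hp]
  exact Finset.sum_congr rfl fun m _ => by rw [polyMap_apply]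
/-- The polynomial restriction map as a `ℂ`-linear map. -/
def polyMapL (d : ℕ) : MvPolynomial (Fin d) ℂ →ₗ[ℂ] C(CBall d, ℂ) :=
  (polyMap d).toLinearMap

lemma homSubmodule_fd (d n : ℕ) :
    FiniteDimensional ℂ (homogeneousSubmodule (Fin d) ℂ n) := by
  have hle : homogeneousSubmodule (Fin d) ℂ n ≤ restrictTotalDegree (Fin d) ℂ n := by
    intro p hp
    rw [mem_restrictTotalDegree]
    exact ((mem_homogeneousSubmodule _ _).mp hp).totalDegree_le
  exact Submodule.finiteDimensional_of_le hle

lemma closed_map_fd (d : ℕ) (S : Submodule ℂ (MvPolynomial (Fin d) ℂ))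
    (hS : FiniteDimensional ℂ S) : IsClosed ((S.map (polyMapL d) : Submodule ℂ C(CBall d, ℂ)) : Set C(CBall d, ℂ)) := by
  haveI := hS
  haveI : FiniteDimensional ℂ (S.map (polyMapL d)) := Module.Finite.map S (polyMapL d)
  exact Submodule.closed_of_finiteDimensional _

lemma dilate_close {d : ℕ} (f : C(CBall d, ℂ)) {ε : ℝ} (hε : 0 < ε) :
    ∃ s : ℝ, 0 < s ∧ s < 1 ∧ ∀ h : ‖(s:ℂ)‖ ≤ 1, ‖dilateFn d (s:ℂ) h f - f‖ ≤ ε := by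
  have huc : UniformContinuous f := CompactSpace.uniformContinuous_of_continuous f.continuous
  obtain ⟨δ, hδ, hδ'⟩ := Metric.uniformContinuous_iff.mp huc ε hε
  refine ⟨max (1/2) (1 - δ/2), lt_max_of_lt_left one_half_pos, ?_, ?_⟩
  · exact max_lt one_half_lt_one (by linarith)
  · intro h
    set s : ℝ := max (1/2) (1 - δ/2) with hs
    refine (ContinuousMap.norm_le _ hε.le).mpr fun z => ?_
    have hdist : dist (dilatePt d (s:ℂ) h z) z < δ := by
      rw [Subtype.dist_eq]
      show dist ((s:ℂ) • (z : Cd d)) (z : Cd d) < δ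
      rw [dist_eq_norm]
      have : (s:ℂ) • (z : Cd d) - (z : Cd d) = ((s:ℂ) - 1) • (z : Cd d) := by
        rw [sub_smul, one_smul]
      rw [this, norm_smul]
      have hz : ‖(z : Cd d)‖ ≤ 1 := mem_closedBall_zero_iff.mp z.2
      have hs1 : s ≤ 1 := le_of_lt (max_lt one_half_lt_one (by linarith))
      have hnorm : ‖(s:ℂ) - 1‖ = 1 - s := by
        have : (s:ℂ) - 1 = ((s - 1 : ℝ) : ℂ) := by push_cast; ring
        rw [this, Complex.norm_real, Real.norm_eq_abs, abs_of_nonpos (by linarith)]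
        ring
      rw [hnorm]
      have h1 : 1 - s ≤ δ/2 := by
        have := le_max_right (1/2 : ℝ) (1 - δ/2)
        linarith
      nlinarith [norm_nonneg (z : Cd d)]
    show ‖f (dilatePt d (s:ℂ) h z) - f z‖ ≤ ε
    have := hδ' hdist
    rw [dist_eq_norm] at this
    exact this.le

/-- `K`, the ideal of polynomials whose restriction lies in `J`. -/
def Kideal (d : ℕ) (J : Set C(CBall d, ℂ)) (hJ : IsIdealOfBallAlg d J) :
    Ideal (MvPolynomial (Fin d) ℂ) where
  carrier := {p | polyMap d p ∈ J}
  zero_mem' := by simpa only [Set.mem_setOf_eq, map_zero] using hJ.2.1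
  add_mem' := fun {a b} ha hb => by
    simpa only [Set.mem_setOf_eq, map_add] using hJ.2.2.1 _ ha _ hb
  smul_mem' := fun q p hp => by
    simp only [Set.mem_setOf_eq, smul_eq_mul, map_mul]
    exact hJ.2.2.2 _ hp _ (polyMap_mem_ballAlg d q)

lemma half_norm : ‖(1/2 : ℂ)‖ < 1 := by
  rw [norm_div, norm_one]
  simp only [Complex.norm_ofNat]
  norm_num

lemma Kideal_homog {d : ℕ} {J : Set C(CBall d, ℂ)} (hJ : IsIdealOfBallAlg d J)
    (hJhom : IsHomogBallIdeal d J) : IsHomogeneousIdeal (Kideal d J hJ) := by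
  intro p hp n
  show polyMap d (homogeneousComponent n p) ∈ J
  have hT := Tmap_poly d (max p.totalDegree n) n (le_max_right _ _) p (le_max_left _ _)
    (1/2) half_norm.le
  have hTJ : Tmap d (max p.totalDegree n) n (1/2) half_norm.le (polyMap d p) ∈ J :=
    Tmap_mem_J hJ hJhom _ _ _ _ half_norm hp
  rw [hT] at hTJ
  have := smul_mem_J hJ hTJ ((2:ℂ)^n)
  rw [smul_smul, ← mul_pow] at this
  norm_num at this
  exact this
lemma tendsto_c_div (c : ℝ) :
    Filter.Tendsto (fun k : ℕ => c/((k:ℝ)+1)) Filter.atTop (nhds 0) := by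
  have base : Filter.Tendsto (fun n : ℕ => 1 / ((n : ℝ) + 1)) Filter.atTop (nhds 0) :=
    tendsto_one_div_add_atTop_nhds_zero_nat
  have h2 := base.const_mul c
  rw [mul_zero] at h2
  simpa [mul_one_div, div_eq_mul_inv] using h2

lemma geom_partial {s : ℝ} (h0 : 0 ≤ s) (h1 : s < 1) (M : ℕ) :
    ∑ m ∈ Finset.range M, s ^ m ≤ (1 - s)⁻¹ := by
  have hpos : 0 < 1 - s := by linarith
  rw [geom_sum_eq (ne_of_lt h1), div_le_iff_of_neg (by linarith : s - 1 < 0)]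
  have heq : (1 - s)⁻¹ * (s - 1) = -1 := by
    field_simp
    ring
  rw [heq]
  nlinarith [pow_nonneg h0 M]

lemma main_closure {d : ℕ} {J : Set C(CBall d, ℂ)} (hJ : IsIdealOfBallAlg d J)
    (hJcl : IsClosed J) (hJhom : IsHomogBallIdeal d J) {f : C(CBall d, ℂ)} (hf : f ∈ J) :
    f ∈ closure (polyMap d ''
      ((Kideal d J hJ : Ideal (MvPolynomial (Fin d) ℂ)) : Set (MvPolynomial (Fin d) ℂ))) := by
  have hq : ∀ k : ℕ, ∃ p : MvPolynomial (Fin d) ℂ, ‖polyMap d p - f‖ < 1/((k:ℝ)+1) := by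
    intro k
    have hfB : f ∈ ballAlg d := hJ.1 hf
    rw [ballAlg, Metric.mem_closure_iff] at hfB
    obtain ⟨b, ⟨p, rfl⟩, hb⟩ := hfB (1/((k:ℝ)+1)) (by positivity)
    exact ⟨p, by rwa [← dist_eq_norm, dist_comm]⟩
  choose q hq using hq
  set g : ℕ → ℕ → C(CBall d, ℂ) := fun n k => polyMap d (homogeneousComponent n (q k)) with hg
  have hgsub : ∀ n k l, ‖g n k - g n l‖ ≤ ‖polyMap d (q k) - f‖ + ‖f - polyMap d (q l)‖ := by
    intro n k l
    have h1 : g n k - g n l = polyMap d (homogeneousComponent n (q k - q l)) := by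
      rw [hg]; simp only [map_sub]
    rw [h1]
    calc ‖polyMap d (homogeneousComponent n (q k - q l))‖
        ≤ ‖polyMap d (q k - q l)‖ := norm_polyMap_homComp_le d n _
      _ = ‖(polyMap d (q k) - f) + (f - polyMap d (q l))‖ := by
          rw [map_sub, sub_add_sub_cancel]
      _ ≤ _ := norm_add_le _ _
  have hbound : ∀ n K k l, K ≤ k → K ≤ l → dist (g n k) (g n l) ≤ 2/((K:ℝ)+1) := by
    intro n K k l hk hl
    rw [dist_eq_norm]
    have h2 : 1/((k:ℝ)+1) ≤ 1/((K:ℝ)+1) := by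
      apply one_div_le_one_div_of_le (by positivity)
      have : (K:ℝ) ≤ (k:ℝ) := by exact_mod_cast hk
      linarith
    have h3 : 1/((l:ℝ)+1) ≤ 1/((K:ℝ)+1) := by
      apply one_div_le_one_div_of_le (by positivity)
      have : (K:ℝ) ≤ (l:ℝ) := by exact_mod_cast hl
      linarith
    have h4a : ‖f - polyMap d (q l)‖ ≤ 1/((l:ℝ)+1) := by
      rw [norm_sub_rev]; exact (hq l).le
    have h4 := (hgsub n k l).trans (add_le_add (hq k).le h4a)
    have h5 : 2/((K:ℝ)+1) = 1/((K:ℝ)+1) + 1/((K:ℝ)+1) := by ring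
    rw [h5]; linarith
  have hcauchy : ∀ n, ∃ F, Filter.Tendsto (fun k => g n k) Filter.atTop (nhds F) := by
    intro n
    apply cauchySeq_tendsto_of_complete
    exact cauchySeq_of_le_tendsto_0 (fun K => 2/((K:ℝ)+1))
      (fun k l K hk hl => hbound n K k l hk hl) (tendsto_c_div 2)
  choose F hF using hcauchy
  have hFg : ∀ n k, ‖F n - g n k‖ ≤ 2/((k:ℝ)+1) := by
    intro n k
    have htend : Filter.Tendsto (fun l => ‖g n l - g n k‖) Filter.atTop
        (nhds ‖F n - g n k‖) := ((hF n).sub tendsto_const_nhds).norm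
    refine le_of_tendsto htend ?_
    filter_upwards [Filter.eventually_ge_atTop k] with l hl
    rw [← dist_eq_norm]
    exact hbound n k l k hl le_rfl
  have hFH : ∀ n, F n ∈
      (((homogeneousSubmodule (Fin d) ℂ n).map (polyMapL d)) : Set C(CBall d, ℂ)) := by
    intro n
    refine (closed_map_fd d _ (homSubmodule_fd d n)).mem_of_tendsto (hF n) ?_
    filter_upwards with k
    exact ⟨homogeneousComponent n (q k),
      (mem_homogeneousSubmodule _ _).mpr (homogeneousComponent_isHomogeneous n (q k)), rfl⟩
  have hFJ : ∀ n, F n ∈ J := by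
    intro n
    have hkey : ((1/2:ℂ))^n • F n ∈ J := by
      set u : ℕ → C(CBall d, ℂ) := fun k =>
        Tmap d (max (q k).totalDegree n) n (1/2) half_norm.le f with hu
      have huJ : ∀ k, u k ∈ J := fun k => Tmap_mem_J hJ hJhom _ _ _ _ half_norm hf
      have hdist : ∀ k, dist (u k) (((1/2:ℂ))^n • F n) ≤ 3/((k:ℝ)+1) := by
        intro k
        have e1 : Tmap d (max (q k).totalDegree n) n (1/2) half_norm.le (polyMap d (q k))
            = ((1/2:ℂ))^n • g n k :=
          Tmap_poly d _ n (le_max_right _ _) (q k) (le_max_left _ _) _ _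
        have e2 : ‖u k - ((1/2:ℂ))^n • g n k‖ ≤ 1/((k:ℝ)+1) := by
          rw [hu, ← e1, Tmap_sub]
          refine (norm_Tmap_le _ _ _ _ _ _).trans ?_
          rw [norm_sub_rev]
          exact (hq k).le
        have e3 : ‖((1/2:ℂ))^n • g n k - ((1/2:ℂ))^n • F n‖ ≤ 2/((k:ℝ)+1) := by
          rw [← smul_sub, norm_smul]
          have hn2 : ‖((1/2:ℂ))^n‖ ≤ 1 := by
            rw [norm_pow]
            exact pow_le_one₀ (norm_nonneg _) half_norm.le
          calc ‖(1/2:ℂ)^n‖ * ‖g n k - F n‖ ≤ 1 * ‖g n k - F n‖ :=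
                mul_le_mul_of_nonneg_right hn2 (norm_nonneg _)
            _ = ‖g n k - F n‖ := one_mul _
            _ ≤ 2/((k:ℝ)+1) := by rw [norm_sub_rev]; exact hFg n k
        calc dist (u k) (((1/2:ℂ))^n • F n)
            ≤ dist (u k) (((1/2:ℂ))^n • g n k) + dist (((1/2:ℂ))^n • g n k)
                (((1/2:ℂ))^n • F n) := dist_triangle _ _ _
          _ ≤ 1/((k:ℝ)+1) + 2/((k:ℝ)+1) := by
              rw [dist_eq_norm, dist_eq_norm]; exact add_le_add e2 e3
          _ = 3/((k:ℝ)+1) := by ring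
      have htendu : Filter.Tendsto u Filter.atTop (nhds (((1/2:ℂ))^n • F n)) := by
        rw [tendsto_iff_dist_tendsto_zero]
        exact squeeze_zero (fun k => dist_nonneg) hdist (tendsto_c_div 3)
      exact hJcl.mem_of_tendsto htendu (Filter.Eventually.of_forall huJ)
    have h6 := smul_mem_J hJ hkey ((2:ℂ)^n)
    rw [smul_smul, ← mul_pow] at h6
    norm_num at h6
    exact h6
  have hpoly : ∀ n, ∃ p' : MvPolynomial (Fin d) ℂ, polyMap d p' = F n := by
    intro n; obtain ⟨p', _, hp'⟩ := hFH n; exact ⟨p', hp'⟩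
  choose pn hpn using hpoly
  have hpnK : ∀ n, pn n ∈ Kideal d J hJ := fun n => by
    show polyMap d (pn n) ∈ J; rw [hpn n]; exact hFJ n
  rw [Metric.mem_closure_iff]
  intro ε hε
  obtain ⟨s, hs0, hs1, hsf⟩ := dilate_close f (show (0:ℝ) < ε/4 by linarith)
  have hsc : ‖(s:ℂ)‖ ≤ 1 := by
    rw [Complex.norm_real, Real.norm_eq_abs, abs_of_pos hs0]; exact hs1.le
  have hspos : 0 < 1 - s := by linarith
  set Cb : ℝ := 1 + 2*(1-s)⁻¹ with hCb
  have hCbpos : 0 < Cb := by positivity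
  obtain ⟨k, hk⟩ := exists_nat_one_div_lt (show 0 < ε/(4*Cb) by positivity)
  set N := (q k).totalDegree with hN
  set P : MvPolynomial (Fin d) ℂ :=
    ∑ m ∈ Finset.range (N+1), MvPolynomial.C ((s:ℂ)^m) * pn m with hP
  have hPK : P ∈ Kideal d J hJ :=
    Ideal.sum_mem _ fun m _ => Ideal.mul_mem_left _ _ (hpnK m)
  refine ⟨polyMap d P, ⟨P, hPK, rfl⟩, ?_⟩
  have hιP : polyMap d P = ∑ m ∈ Finset.range (N+1), (s:ℂ)^m • F m := by
    rw [hP, map_sum]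
    refine Finset.sum_congr rfl fun m _ => ?_
    rw [map_mul, ← hpn m]
    rw [show polyMap d (MvPolynomial.C ((s:ℂ)^m)) = algebraMap ℂ C(CBall d, ℂ) ((s:ℂ)^m) from by
      rw [← MvPolynomial.algebraMap_eq, AlgHom.commutes], ← Algebra.smul_def]
  have h1 : ‖f - dilateFn d (s:ℂ) hsc f‖ ≤ ε/4 := by rw [norm_sub_rev]; exact hsf hsc
  have h2 : ‖dilateFn d (s:ℂ) hsc f - dilateFn d (s:ℂ) hsc (polyMap d (q k))‖
      ≤ 1/((k:ℝ)+1) := by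
    rw [← dilateFn_sub]
    refine (norm_dilateFn_le _ _ _).trans ?_
    rw [norm_sub_rev]
    exact (hq k).le
  have h3 : dilateFn d (s:ℂ) hsc (polyMap d (q k))
      = ∑ m ∈ Finset.range (N+1), (s:ℂ)^m • g m k :=
    dilate_polyMap_expand N (q k) le_rfl _ hsc
  have h4 : ‖(∑ m ∈ Finset.range (N+1), (s:ℂ)^m • g m k) - polyMap d P‖
      ≤ (1-s)⁻¹ * (2/((k:ℝ)+1)) := by
    rw [hιP, ← Finset.sum_sub_distrib]
    calc ‖∑ m ∈ Finset.range (N+1), ((s:ℂ)^m • g m k - (s:ℂ)^m • F m)‖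
        ≤ ∑ m ∈ Finset.range (N+1), ‖(s:ℂ)^m • g m k - (s:ℂ)^m • F m‖ := norm_sum_le _ _
      _ ≤ ∑ m ∈ Finset.range (N+1), s^m * (2/((k:ℝ)+1)) := by
          refine Finset.sum_le_sum fun m _ => ?_
          rw [← smul_sub, norm_smul]
          have : ‖((s:ℂ))^m‖ = s^m := by
            rw [norm_pow, Complex.norm_real, Real.norm_eq_abs, abs_of_pos hs0]
          rw [this]
          refine mul_le_mul_of_nonneg_left ?_ (by positivity)
          rw [norm_sub_rev]; exact hFg m k
      _ = (∑ m ∈ Finset.range (N+1), s^m) * (2/((k:ℝ)+1)) := by rw [Finset.sum_mul]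
      _ ≤ (1-s)⁻¹ * (2/((k:ℝ)+1)) := by
          refine mul_le_mul_of_nonneg_right (geom_partial hs0.le hs1 _) (by positivity)
  rw [dist_eq_norm]
  have htr : ‖f - polyMap d P‖ ≤ ε/4 + 1/((k:ℝ)+1) + (1-s)⁻¹ * (2/((k:ℝ)+1)) := by
    calc ‖f - polyMap d P‖
        ≤ ‖f - dilateFn d (s:ℂ) hsc f‖ +
            ‖dilateFn d (s:ℂ) hsc f - dilateFn d (s:ℂ) hsc (polyMap d (q k))‖ +
            ‖dilateFn d (s:ℂ) hsc (polyMap d (q k)) - polyMap d P‖ := by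
          have := dist_triangle4 f (dilateFn d (s:ℂ) hsc f)
            (dilateFn d (s:ℂ) hsc (polyMap d (q k))) (polyMap d P)
          simpa [dist_eq_norm] using this
      _ ≤ ε/4 + 1/((k:ℝ)+1) + (1-s)⁻¹ * (2/((k:ℝ)+1)) := by
          refine add_le_add (add_le_add h1 h2) ?_
          rw [h3]; exact h4
  have hklt : 1/((k:ℝ)+1) < ε/(4*Cb) := hk
  have hcb1 : 1/((k:ℝ)+1) + (1-s)⁻¹ * (2/((k:ℝ)+1)) = Cb * (1/((k:ℝ)+1)) := by
    rw [hCb]; ring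
  have hcb2 : Cb * (1/((k:ℝ)+1)) < Cb * (ε/(4*Cb)) :=
    mul_lt_mul_of_pos_left hklt hCbpos
  have hcb3 : Cb * (ε/(4*Cb)) = ε/4 := by field_simp
  linarith [htr]
lemma uniqueness {d : ℕ} {J : Set C(CBall d, ℂ)} (hJ : IsIdealOfBallAlg d J)
    (K' : Ideal (MvPolynomial (Fin d) ℂ)) (hK'hom : IsHomogeneousIdeal K')
    (hK'sub : polyMap d '' (K' : Set (MvPolynomial (Fin d) ℂ)) ⊆ J)
    (hJsub : J ⊆ closure (polyMap d '' (K' : Set (MvPolynomial (Fin d) ℂ)))) :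
    K' = Kideal d J hJ := by
  apply le_antisymm
  · intro p hp
    show polyMap d p ∈ J
    exact hK'sub ⟨p, hp, rfl⟩
  · intro p hp
    have hpJ : polyMap d p ∈ J := hp
    have hcl : polyMap d p ∈ closure (polyMap d '' (K' : Set (MvPolynomial (Fin d) ℂ))) :=
      hJsub hpJ
    have hcomp : ∀ n, homogeneousComponent n p ∈ K' := by
      intro n
      set S : Submodule ℂ (MvPolynomial (Fin d) ℂ) :=
        (Submodule.restrictScalars ℂ K') ⊓ homogeneousSubmodule (Fin d) ℂ n with hS
      have hSfd : FiniteDimensional ℂ S := by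
        haveI := homSubmodule_fd d n
        exact Submodule.finiteDimensional_of_le inf_le_right
      have hVclosed : IsClosed ((S.map (polyMapL d) : Submodule ℂ C(CBall d, ℂ)) :
          Set C(CBall d, ℂ)) := closed_map_fd d S hSfd
      have hmemV : polyMap d (homogeneousComponent n p) ∈
          ((S.map (polyMapL d) : Submodule ℂ C(CBall d, ℂ)) : Set C(CBall d, ℂ)) := by
        rw [← hVclosed.closure_eq, Metric.mem_closure_iff]
        intro ε hε
        rw [Metric.mem_closure_iff] at hcl
        obtain ⟨b, ⟨r, hrK', rfl⟩, hb⟩ := hcl ε hε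
        set N := max (max p.totalDegree r.totalDegree) n with hN
        have hn : n ≤ N := le_max_right _ _
        have hpN : p.totalDegree ≤ N := le_trans (le_max_left _ _) (le_max_left _ _)
        have hrN : r.totalDegree ≤ N := le_trans (le_max_right _ _) (le_max_left _ _)
        have hone : ‖(1:ℂ)‖ ≤ 1 := by rw [norm_one]
        have e1 : Tmap d N n 1 hone (polyMap d p)
            = polyMap d (homogeneousComponent n p) := by
          rw [Tmap_poly d N n hn p hpN 1 hone, one_pow, one_smul]
        have e2 : Tmap d N n 1 hone (polyMap d r)
            = polyMap d (homogeneousComponent n r) := by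
          rw [Tmap_poly d N n hn r hrN 1 hone, one_pow, one_smul]
        refine ⟨polyMap d (homogeneousComponent n r), ?_, ?_⟩
        · refine ⟨homogeneousComponent n r, Submodule.mem_inf.mpr ⟨?_, ?_⟩, rfl⟩
          · exact hK'hom r hrK' n
          · exact (mem_homogeneousSubmodule _ _).mpr (homogeneousComponent_isHomogeneous n r)
        · rw [dist_eq_norm] at hb ⊢
          rw [← e1, ← e2, Tmap_sub]
          exact lt_of_le_of_lt (norm_Tmap_le _ _ _ _ _ _) hb
      obtain ⟨r', hr'S, hr'⟩ := hmemV
      have hr'eq : r' = homogeneousComponent n p := polyMap_injective d hr'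
      have := (Submodule.mem_inf.mp hr'S).1
      rw [hr'eq] at this
      exact this
    have hsum := sum_homogeneousComponent p
    rw [← hsum]
    exact Ideal.sum_mem _ fun n _ => hcomp n

end Stmt15Aux

open Stmt15Aux


/-- Let `J` be a closed homogeneous ideal of the ball algebra.
Then `K = {p : ι(p) ∈ J}` is a homogeneous polynomial ideal with
`ι(K) ⊆ J ⊆ closure(ι(K))` (hence `J = closure(ι(K))`), and `K` is the unique
homogeneous polynomial ideal with this property. -/
theorem stmt15 (d : ℕ) (J : Set C(CBall d, ℂ))
    (hJ : IsIdealOfBallAlg d J) (hJcl : IsClosed J) (hJhom : IsHomogBallIdeal d J) :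
    ∃ K : Ideal (MvPolynomial (Fin d) ℂ),
      (K : Set (MvPolynomial (Fin d) ℂ)) = {p | polyMap d p ∈ J} ∧
      IsHomogeneousIdeal K ∧
      polyMap d '' (K : Set (MvPolynomial (Fin d) ℂ)) ⊆ J ∧
      J = closure (polyMap d '' (K : Set (MvPolynomial (Fin d) ℂ))) ∧
      ∀ K' : Ideal (MvPolynomial (Fin d) ℂ), IsHomogeneousIdeal K' →
        polyMap d '' (K' : Set (MvPolynomial (Fin d) ℂ)) ⊆ J →
        J ⊆ closure (polyMap d '' (K' : Set (MvPolynomial (Fin d) ℂ))) → K' = K := by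
  refine ⟨Kideal d J hJ, rfl, Kideal_homog hJ hJhom, ?_, ?_, ?_⟩
  · rintro _ ⟨p, hp, rfl⟩
    exact hp
  · apply Set.Subset.antisymm
    · intro f hf
      exact main_closure hJ hJcl hJhom hf
    · have hsub : polyMap d '' ((Kideal d J hJ : Ideal (MvPolynomial (Fin d) ℂ)) :
          Set (MvPolynomial (Fin d) ℂ)) ⊆ J := by
        rintro _ ⟨p, hp, rfl⟩
        exact hp
      calc closure (polyMap d '' ((Kideal d J hJ : Ideal (MvPolynomial (Fin d) ℂ)) :
            Set (MvPolynomial (Fin d) ℂ))) ⊆ closure J := closure_mono hsub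
        _ = J := hJcl.closure_eq
  · intro K' h1 h2 h3
    exact uniqueness hJ K' h1 h2 h3
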